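/- Let (x_n) be a summable sequence of positive real numbers. If the uniqueness set U(x_n) equals {0, ∑_{n=1}^∞ x_n}, then the achievement set E(x_n) is the whole interval [0, ∑_{n=1}^∞ x_n]. -/

import Mathlib

open Set Topology

noncomputable section

/-- The achievement set (set of subsums) of a series `∑ xₙ`. -/
def achSet (x : ℕ → ℝ) : Set ℝ := {t : ℝ | ∃ A : Set ℕ, t = ∑' n : A, x n}

/-- The uniqueness set: points having exactly one representation as a subsum. -/
def uniqSet (x : ℕ → ℝ) : Set ℝ := {t : ℝ | ∃! A : Set ℕ, t = ∑' n : A, x n}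

section helpers
variable {x : ℕ → ℝ}

private lemma fA_eq (x : ℕ → ℝ) (A : Set ℕ) : (∑' n : A, x n) = ∑' n, A.indicator x n :=
  tsum_subtype A x

private lemma fA_nonneg (hpos : ∀ n, 0 ≤ x n) (A : Set ℕ) : 0 ≤ ∑' n : A, x n := by
  rw [fA_eq]
  exact tsum_nonneg (fun n => Set.indicator_nonneg (fun i _ => hpos i) n)

private lemma fA_mono (hpos : ∀ n, 0 ≤ x n) (hsum : Summable x) {A B : Set ℕ} (h : A ⊆ B) :
    (∑' n : A, x n) ≤ ∑' n : B, x n := by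
  rw [fA_eq, fA_eq]
  exact Summable.tsum_le_tsum (fun n => Set.indicator_le_indicator_of_subset h hpos n)
    (hsum.indicator A) (hsum.indicator B)

private lemma fA_union (hsum : Summable x) {A B : Set ℕ} (h : Disjoint A B) :
    (∑' n : (A ∪ B : Set ℕ), x n) = (∑' n : A, x n) + ∑' n : B, x n := by
  rw [fA_eq, fA_eq, fA_eq, Set.indicator_union_of_disjoint h]
  exact Summable.tsum_add (hsum.indicator A) (hsum.indicator B)

private lemma fA_singleton (j : ℕ) : (∑' n : ({j} : Set ℕ), x n) = x j := tsum_singleton j x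

private lemma fA_insert_le (hsum : Summable x) {B : Set ℕ} {k : ℕ} (hk : k ∈ B) :
    (∑' n : (B \ {k} : Set ℕ), x n) + x k = ∑' n : B, x n := by
  have hd : Disjoint (B \ {k} : Set ℕ) {k} := Set.disjoint_sdiff_left.mono_right le_rfl
  have : ((B \ {k}) ∪ {k} : Set ℕ) = B := by
    rw [Set.diff_union_self]; exact Set.union_eq_self_of_subset_right (by simpa using hk)
  rw [← fA_singleton (x := x) k, ← fA_union hsum hd, this]

/-- The separation/uniqueness lemma: if every element of `F` exceeds the sum over `Fᶜ`,
then `∑_F` has a unique representation. -/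
private lemma rep_unique (hpos : ∀ n, 0 < x n) (hsum : Summable x) (F : Finset ℕ)
    (hsep : ∀ j ∈ F, (∑' n : ((↑F : Set ℕ)ᶜ : Set ℕ), x n) < x j)
    (B : Set ℕ) (hB : (∑' n : B, x n) = ∑' n : (↑F : Set ℕ), x n) : B = ↑F := by
  have hposle : ∀ n, 0 ≤ x n := fun n => (hpos n).le
  have hFB : (↑F : Set ℕ) ⊆ B := by
    by_contra h
    obtain ⟨j, hjF, hjB⟩ : ∃ j ∈ F, j ∉ B := by
      simpa [Set.subset_def] using h
    have hsplit : B = (B ∩ ↑F) ∪ (B \ ↑F) := (Set.inter_union_diff B ↑F).symm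
    have hd : Disjoint (B ∩ (↑F : Set ℕ)) (B \ ↑F) :=
      Set.disjoint_sdiff_right.mono_left Set.inter_subset_right
    have h1 : (∑' n : (B ∩ (↑F : Set ℕ) : Set ℕ), x n)
        ≤ ∑' n : ((↑F : Set ℕ) \ {j} : Set ℕ), x n := by
      apply fA_mono hposle hsum
      intro n hn
      exact ⟨hn.2, by rintro rfl; exact hjB hn.1⟩
    have h2 : (∑' n : (B \ (↑F : Set ℕ) : Set ℕ), x n) ≤ ∑' n : ((↑F : Set ℕ)ᶜ : Set ℕ), x n :=
      fA_mono hposle hsum (fun n hn => hn.2)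
    have h3 : (∑' n : ((↑F : Set ℕ) \ {j} : Set ℕ), x n) + x j = ∑' n : (↑F : Set ℕ), x n :=
      fA_insert_le hsum (by simpa using hjF)
    have : (∑' n : B, x n) < ∑' n : (↑F : Set ℕ), x n := by
      calc (∑' n : B, x n)
          = (∑' n : (B ∩ (↑F : Set ℕ) : Set ℕ), x n)
            + ∑' n : (B \ (↑F : Set ℕ) : Set ℕ), x n := by
            rw [← fA_union hsum hd, ← hsplit]
        _ < (∑' n : ((↑F : Set ℕ) \ {j} : Set ℕ), x n) + x j :=
            add_lt_add_of_le_of_lt h1 (lt_of_le_of_lt h2 (hsep j hjF))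
        _ = _ := h3
    exact absurd hB this.ne
  by_contra hne
  obtain ⟨k, hkB, hkF⟩ : ∃ k ∈ B, k ∉ (↑F : Set ℕ) := by
    rcases Set.not_subset.mp (fun hsub => hne (le_antisymm hsub hFB)) with ⟨k, h1, h2⟩
    exact ⟨k, h1, h2⟩
  have h4 : (∑' n : (B \ {k} : Set ℕ), x n) + x k = ∑' n : B, x n := fA_insert_le hsum hkB
  have h5 : (∑' n : (↑F : Set ℕ), x n) ≤ ∑' n : (B \ {k} : Set ℕ), x n := by
    apply fA_mono hposle hsum
    intro n hn
    exact ⟨hFB hn, by rintro rfl; exact hkF hn⟩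
  have : (∑' n : (↑F : Set ℕ), x n) < ∑' n : B, x n := by
    rw [← h4]; exact lt_of_le_of_lt h5 (lt_add_of_pos_right _ (hpos k))
  exact absurd hB this.ne'

/-- From the hypothesis on the uniqueness set: every nonempty finite set contains an element
dominated by the sum over the complement. -/
private lemma kakeya_raw (hpos : ∀ n, 0 < x n) (hsum : Summable x)
    (hU : uniqSet x = {0, ∑' n, x n}) (F : Finset ℕ) (hF : F.Nonempty) :
    ∃ j ∈ F, x j ≤ ∑' n : ((↑F : Set ℕ)ᶜ : Set ℕ), x n := by
  by_contra h
  push_neg at h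
  have hsep : ∀ j ∈ F, (∑' n : ((↑F : Set ℕ)ᶜ : Set ℕ), x n) < x j := h
  set t₀ := ∑' n : (↑F : Set ℕ), x n with ht₀
  have hmem : t₀ ∈ uniqSet x :=
    ⟨↑F, ht₀, fun B hB => rep_unique hpos hsum F hsep B hB.symm⟩
  rw [hU] at hmem
  obtain ⟨j, hjF⟩ := hF
  have hjle : x j ≤ t₀ := by
    rw [← fA_singleton (x := x) j]
    exact fA_mono (fun n => (hpos n).le) hsum (by simpa using hjF)
  have ht₀pos : 0 < t₀ := lt_of_lt_of_le (hpos j) hjle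
  have hcne : ((↑F : Set ℕ)ᶜ).Nonempty := (F.finite_toSet.infinite_compl).nonempty
  obtain ⟨k, hk⟩ := hcne
  have hkle : x k ≤ ∑' n : ((↑F : Set ℕ)ᶜ : Set ℕ), x n := by
    rw [← fA_singleton (x := x) k]
    exact fA_mono (fun n => (hpos n).le) hsum (by simpa using hk)
  have hS : (∑' n, x n) = t₀ + ∑' n : ((↑F : Set ℕ)ᶜ : Set ℕ), x n := by
    rw [← tsum_univ x, ← fA_union hsum disjoint_compl_right, Set.union_compl_self]
  have ht₀lt : t₀ < ∑' n, x n := by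
    rw [hS]
    exact lt_add_of_pos_right _ (lt_of_lt_of_le (hpos k) hkle)
  rcases hmem with h0 | hSs
  · exact absurd h0 ht₀pos.ne'
  · exact absurd hSs ht₀lt.ne

private lemma exists_argmax (hpos : ∀ n, 0 < x n) (hsum : Summable x) (s : Finset ℕ) :
    ∃ m, m ∉ s ∧ ∀ n, n ∉ s → x n ≤ x m := by
  obtain ⟨n₀, hn₀⟩ := Infinite.exists_notMem_finset s
  have hfin : {n | x n₀ ≤ x n}.Finite := by
    have h1 : ∀ᶠ n in Filter.atTop, x n < x n₀ :=
      (hsum.tendsto_atTop_zero).eventually_lt_const (hpos n₀)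
    rw [← Nat.cofinite_eq_atTop] at h1
    simpa [Filter.eventually_cofinite, not_lt] using h1
  classical
  set T := hfin.toFinset \ s with hT
  have hn₀T : n₀ ∈ T := by
    simp [hT, hfin.mem_toFinset]
    exact hn₀
  obtain ⟨m, hmT, hmax⟩ := T.exists_max_image x ⟨n₀, hn₀T⟩
  refine ⟨m, ?_, ?_⟩
  · rw [hT, Finset.mem_sdiff] at hmT; exact hmT.2
  · intro n hn
    by_cases hc : x n₀ ≤ x n
    · refine hmax n ?_
      rw [hT, Finset.mem_sdiff, hfin.mem_toFinset]
      exact ⟨hc, hn⟩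
    · exact le_trans (not_le.mp hc).le (hmax n₀ hn₀T)

private lemma exists_sorted_bij (hpos : ∀ n, 0 < x n) (hsum : Summable x) :
    ∃ σ : ℕ → ℕ, Function.Bijective σ ∧ Antitone (fun k => x (σ k)) := by
  classical
  choose p hp1 hp2 using exists_argmax hpos hsum
  let C : ℕ → Finset ℕ := fun k => Nat.rec ∅ (fun _ Ck => insert (p Ck) Ck) k
  have hC0 : C 0 = ∅ := rfl
  have hCs : ∀ k, C (k + 1) = insert (p (C k)) (C k) := fun k => rfl
  set σ : ℕ → ℕ := fun k => p (C k) with hσ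
  have hmemsucc : ∀ k, σ k ∈ C (k + 1) := by
    intro k; rw [hCs]; exact Finset.mem_insert_self _ _
  have hCmono : Monotone C := by
    apply monotone_nat_of_le_succ
    intro k; rw [hCs]; exact Finset.subset_insert _ _
  have hnotmem : ∀ k, σ k ∉ C k := fun k => hp1 (C k)
  have hinj : Function.Injective σ := by
    intro i j hij
    by_contra hne
    rcases Nat.lt_or_ge i j with h | h
    · exact hnotmem j (hij ▸ hCmono (Nat.succ_le_of_lt h) (hmemsucc i))
    · have h' : j < i := lt_of_le_of_ne h (Ne.symm hne)
      exact hnotmem i (hij ▸ hCmono (Nat.succ_le_of_lt h') (hmemsucc j))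
  have hanti : Antitone fun k => x (σ k) := by
    apply antitone_nat_of_succ_le
    intro k
    have : σ (k + 1) ∉ C k := fun hmem => hnotmem (k + 1) (hCmono (Nat.le_succ k) hmem)
    exact hp2 (C k) (σ (k + 1)) this
  have hnotC : ∀ m, (∀ k, σ k ≠ m) → ∀ k, m ∉ C k := by
    intro m hm k
    induction k with
    | zero => simp [hC0]
    | succ k ih =>
      rw [hCs, Finset.mem_insert]
      rintro (h | h)
      · exact hm k h.symm
      · exact ih h
  have hsurj : Function.Surjective σ := by
    intro m
    by_contra hm
    push_neg at hm
    have hmC := hnotC m hm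
    have hge : ∀ k, x m ≤ x (σ k) := fun k => hp2 (C k) m (hmC k)
    have hfin : {n | x m ≤ x n}.Finite := by
      have h1 : ∀ᶠ n in Filter.atTop, x n < x m :=
        (hsum.tendsto_atTop_zero).eventually_lt_const (hpos m)
      rw [← Nat.cofinite_eq_atTop] at h1
      simpa [Filter.eventually_cofinite, not_lt] using h1
    have : (Set.range σ).Finite := hfin.subset (by rintro _ ⟨k, rfl⟩; exact hge k)
    exact (Set.infinite_range_of_injective hinj) this
  exact ⟨σ, ⟨hinj, hsurj⟩, hanti⟩

end helpers

private lemma greedy_achieves {y : ℕ → ℝ} (hpos : ∀ k, 0 < y k) (hsum : Summable y)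
    (hKak : ∀ n, y n ≤ ∑' i, y (i + (n + 1)))
    {t : ℝ} (ht0 : 0 ≤ t) (htS : t ≤ ∑' k, y k) :
    ∃ A : Set ℕ, t = ∑' k : A, y k := by
  classical
  set r : ℕ → ℝ := fun n => Nat.rec t (fun n rn => if y n ≤ rn then rn - y n else rn) n with hr
  have hr0 : r 0 = t := rfl
  have hrs : ∀ n, r (n + 1) = if y n ≤ r n then r n - y n else r n := fun n => rfl
  set tail : ℕ → ℝ := fun n => ∑' i, y (i + n) with htaildef
  have hsum_shift : ∀ n, Summable fun i => y (i + n) := fun n => (summable_nat_add_iff n).mpr hsum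
  have htail_succ : ∀ n, tail n = y n + tail (n + 1) := by
    intro n
    have h1 : (∑' i, y (i + n)) = y (0 + n) + ∑' i, y ((i + 1) + n) :=
      Summable.tsum_eq_zero_add (hsum_shift n)
    have h2 : (fun i => y ((i + 1) + n)) = fun i => y (i + (n + 1)) := by
      funext i; congr 1; omega
    simpa [htaildef, h2] using h1
  have hrnonneg : ∀ n, 0 ≤ r n := by
    intro n
    induction n with
    | zero => exact ht0
    | succ n ih =>
      rw [hrs]
      split_ifs with h
      · linarith
      · exact ih
  have hrtail : ∀ n, r n ≤ tail n := by
    intro n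
    induction n with
    | zero => simpa [htaildef, hr0] using htS
    | succ n ih =>
      rw [hrs]
      split_ifs with h
      · have := htail_succ n; linarith
      · have := hKak n
        have h2 : tail (n + 1) = ∑' i, y (i + (n + 1)) := rfl
        rw [h2]; linarith [not_le.mp h]
  set g : ℕ → ℝ := fun i => if y i ≤ r i then y i else 0 with hg
  have hpart : ∀ n, ∑ i ∈ Finset.range n, g i = t - r n := by
    intro n
    induction n with
    | zero => simp [hr0]
    | succ n ih =>
      rw [Finset.sum_range_succ, ih, hrs]
      simp only [hg]
      split_ifs with h
      · ring
      · ring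
  have htail0 : Filter.Tendsto tail Filter.atTop (nhds 0) := by
    have heq : ∀ n, tail n = (∑' k, y k) - ∑ i ∈ Finset.range n, y i := by
      intro n
      have := Summable.sum_add_tsum_nat_add n hsum
      simp only [htaildef]
      linarith
    have hten : Filter.Tendsto (fun n => (∑' k, y k) - ∑ i ∈ Finset.range n, y i)
        Filter.atTop (nhds 0) := by
      have := (hsum.hasSum.tendsto_sum_nat).const_sub (∑' k, y k)
      simpa using this
    simpa [← heq] using hten
  have hr0' : Filter.Tendsto r Filter.atTop (nhds 0) := squeeze_zero hrnonneg hrtail htail0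
  have hgpart : Filter.Tendsto (fun n => ∑ i ∈ Finset.range n, g i) Filter.atTop (nhds t) := by
    have : Filter.Tendsto (fun n => t - r n) Filter.atTop (nhds t) := by
      have := hr0'.const_sub t
      simpa using this
    simpa [hpart] using this
  have hgnonneg : ∀ i, 0 ≤ g i := by
    intro i; simp only [hg]; split_ifs with h
    · exact (hpos i).le
    · exact le_refl 0
  have hgsum : HasSum g t := (hasSum_iff_tendsto_nat_of_nonneg hgnonneg t).mpr hgpart
  refine ⟨{i | y i ≤ r i}, ?_⟩
  have hind : ({i | y i ≤ r i}).indicator y = g := by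
    funext i
    simp [Set.indicator_apply, hg]
  rw [tsum_subtype, hind, hgsum.tsum_eq]

theorem achSet_eq_Icc_of_uniqSet_pair (x : ℕ → ℝ) (hpos : ∀ n, 0 < x n) (hsum : Summable x)
    (hU : uniqSet x = {0, ∑' n, x n}) :
    achSet x = Set.Icc 0 (∑' n, x n) := by
  have hposle : ∀ n, 0 ≤ x n := fun n => (hpos n).le
  ext t
  simp only [achSet, Set.mem_setOf_eq, Set.mem_Icc]
  constructor
  · rintro ⟨A, rfl⟩
    refine ⟨fA_nonneg hposle A, ?_⟩
    rw [← tsum_univ x]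
    exact fA_mono hposle hsum (Set.subset_univ A)
  · rintro ⟨ht0, htS⟩
    have hK : ∀ F : Finset ℕ, F.Nonempty →
        ∃ j ∈ F, x j ≤ ∑' n : ((↑F : Set ℕ)ᶜ : Set ℕ), x n :=
      kakeya_raw hpos hsum hU
    obtain ⟨σ, hbij, hanti⟩ := exists_sorted_bij hpos hsum
    set y : ℕ → ℝ := fun k => x (σ k) with hy
    have hysum : Summable y := hsum.comp_injective hbij.injective
    have hS_y : (∑' k, y k) = ∑' n, x n := (Equiv.ofBijective σ hbij).tsum_eq x
    have hypos : ∀ k, 0 < y k := fun k => hpos _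
    have hKak : ∀ n, y n ≤ ∑' i, y (i + (n + 1)) := by
      intro n
      set F : Finset ℕ := Finset.image σ (Finset.range (n + 1)) with hF
      have hFne : F.Nonempty := ⟨σ 0, Finset.mem_image.mpr ⟨0, by simp, rfl⟩⟩
      obtain ⟨j, hjF, hjle⟩ := hK F hFne
      obtain ⟨i, hi, rfl⟩ := Finset.mem_image.mp hjF
      have h1 : y n ≤ x (σ i) := hanti (Nat.lt_succ_iff.mp (Finset.mem_range.mp hi))
      have hfF : (∑' m : (↑F : Set ℕ), x m) = ∑ i ∈ Finset.range (n + 1), y i := by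
        rw [Finset.tsum_subtype']
        rw [hF, Finset.sum_image (fun a _ b _ h => hbij.injective h)]
      have hsplit : (∑' m : (↑F : Set ℕ), x m) + (∑' m : ((↑F : Set ℕ)ᶜ : Set ℕ), x m)
          = ∑' n, x n := by
        rw [← fA_union hsum disjoint_compl_right, Set.union_compl_self, tsum_univ]
      have htailm : (∑ i ∈ Finset.range (n + 1), y i) + (∑' i, y (i + (n + 1))) = ∑' n, x n := by
        rw [Summable.sum_add_tsum_nat_add (n + 1) hysum, hS_y]
      have h2 : (∑' m : ((↑F : Set ℕ)ᶜ : Set ℕ), x m) = ∑' i, y (i + (n + 1)) := by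
        linarith [hfF, hsplit, htailm]
      exact h1.trans (hjle.trans_eq h2)
    have htS' : t ≤ ∑' k, y k := by rw [hS_y]; exact htS
    obtain ⟨A', hA'⟩ := greedy_achieves hypos hysum hKak ht0 htS'
    refine ⟨σ '' A', ?_⟩
    rw [tsum_image x (hbij.injective.injOn)]
    exact hA'
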